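/- arXiv:2209.01151 — 2 statements merged into one kernel-verified Lean document; each statement's English description precedes it below -/
import Mathlib

section
/- The homogeneous sextic polynomial s(x₀,…,x₄) given explicitly in the Veronese example equals the sum of squares 4g₁² + 4g₂² + g₃² + g₄² + 3g₅² + 12g₆² + 12g₇², where g₁ = −x₁²x₂+x₀x₁x₂−2x₂x₃²+x₂³−x₁x₃x₄+2x₀x₃x₄+x₂x₄², g₂ = x₀²x₃−x₀x₁x₃+2x₂²x₃−x₃³+x₀x₂x₄−2x₁x₂x₄−x₃x₄², g₃ = 2x₀x₁x₄−x₀x₂x₃−x₁x₂x₃+x₂²x₄+x₃²x₄−2x₄³, g₄ = x₀²x₁−x₀x₁²+x₀x₂²−x₀x₄²−x₁x₃²+x₁x₄², g₅ = x₀x₂x₃−x₁x₂x₃+x₂²x₄−x₃²x₄, g₆ = x₂x₃²−x₀x₃x₄−x₂x₄², g₇ = x₂²x₃−x₁x₂x₄−x₃x₄². In particular s is nonnegative on ℝ⁵. -/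
set_option maxHeartbeats 2000000 in
/-- The explicit sextic `s` from the Veronese example equals the stated sum of squares
`4g₁² + 4g₂² + g₃² + g₄² + 3g₅² + 12g₆² + 12g₇²`; in particular it is nonnegative on ℝ⁵. -/
theorem veronese_sextic_sos (x0 x1 x2 x3 x4 : ℝ) :
    (x0^4*x1^2 - 2*x0^3*x1^3 + x0^2*x1^4 + 2*x0^3*x1*x2^2 + 2*x0^2*x1^2*x2^2
      - 8*x0*x1^3*x2^2 + 4*x1^4*x2^2 + x0^2*x2^4 + 8*x0*x1*x2^4 - 8*x1^2*x2^4 + 4*x2^6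
      + 4*x0^4*x3^2 - 8*x0^3*x1*x3^2 + 2*x0^2*x1^2*x3^2 + 2*x0*x1^3*x3^2
      + 20*x0^2*x2^2*x3^2 - 38*x0*x1*x2^2*x3^2 + 20*x1^2*x2^2*x3^2 + 12*x2^4*x3^2
      - 8*x0^2*x3^4 + 8*x0*x1*x3^4 + x1^2*x3^4 + 12*x2^2*x3^4 + 4*x3^6
      + 8*x0^3*x2*x3*x4 - 12*x0^2*x1*x2*x3*x4 - 12*x0*x1^2*x2*x3*x4 + 8*x1^3*x2*x3*x4
      + 36*x0*x2^3*x3*x4 - 72*x1*x2^3*x3*x4 - 72*x0*x2*x3^3*x4 + 36*x1*x2*x3^3*x4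
      - 2*x0^3*x1*x4^2 + 8*x0^2*x1^2*x4^2 - 2*x0*x1^3*x4^2 + 2*x0^2*x2^2*x4^2
      - 2*x0*x1*x2^2*x4^2 + 20*x1^2*x2^2*x4^2 + 12*x2^4*x4^2 + 20*x0^2*x3^2*x4^2
      - 2*x0*x1*x3^2*x4^2 + 2*x1^2*x3^2*x4^2 - 84*x2^2*x3^2*x4^2 + 12*x3^4*x4^2
      + 36*x0*x2*x3*x4^3 + 36*x1*x2*x3*x4^3 + x0^2*x4^4 - 10*x0*x1*x4^4 + x1^2*x4^4
      + 12*x2^2*x4^4 + 12*x3^2*x4^4 + 4*x4^6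
    = 4*(-x1^2*x2 + x0*x1*x2 - 2*x2*x3^2 + x2^3 - x1*x3*x4 + 2*x0*x3*x4 + x2*x4^2)^2
      + 4*(x0^2*x3 - x0*x1*x3 + 2*x2^2*x3 - x3^3 + x0*x2*x4 - 2*x1*x2*x4 - x3*x4^2)^2
      + (2*x0*x1*x4 - x0*x2*x3 - x1*x2*x3 + x2^2*x4 + x3^2*x4 - 2*x4^3)^2
      + (x0^2*x1 - x0*x1^2 + x0*x2^2 - x0*x4^2 - x1*x3^2 + x1*x4^2)^2
      + 3*(x0*x2*x3 - x1*x2*x3 + x2^2*x4 - x3^2*x4)^2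
      + 12*(x2*x3^2 - x0*x3*x4 - x2*x4^2)^2
      + 12*(x2^2*x3 - x1*x2*x4 - x3*x4^2)^2) ∧
    0 ≤ x0^4*x1^2 - 2*x0^3*x1^3 + x0^2*x1^4 + 2*x0^3*x1*x2^2 + 2*x0^2*x1^2*x2^2
      - 8*x0*x1^3*x2^2 + 4*x1^4*x2^2 + x0^2*x2^4 + 8*x0*x1*x2^4 - 8*x1^2*x2^4 + 4*x2^6
      + 4*x0^4*x3^2 - 8*x0^3*x1*x3^2 + 2*x0^2*x1^2*x3^2 + 2*x0*x1^3*x3^2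
      + 20*x0^2*x2^2*x3^2 - 38*x0*x1*x2^2*x3^2 + 20*x1^2*x2^2*x3^2 + 12*x2^4*x3^2
      - 8*x0^2*x3^4 + 8*x0*x1*x3^4 + x1^2*x3^4 + 12*x2^2*x3^4 + 4*x3^6
      + 8*x0^3*x2*x3*x4 - 12*x0^2*x1*x2*x3*x4 - 12*x0*x1^2*x2*x3*x4 + 8*x1^3*x2*x3*x4
      + 36*x0*x2^3*x3*x4 - 72*x1*x2^3*x3*x4 - 72*x0*x2*x3^3*x4 + 36*x1*x2*x3^3*x4
      - 2*x0^3*x1*x4^2 + 8*x0^2*x1^2*x4^2 - 2*x0*x1^3*x4^2 + 2*x0^2*x2^2*x4^2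
      - 2*x0*x1*x2^2*x4^2 + 20*x1^2*x2^2*x4^2 + 12*x2^4*x4^2 + 20*x0^2*x3^2*x4^2
      - 2*x0*x1*x3^2*x4^2 + 2*x1^2*x3^2*x4^2 - 84*x2^2*x3^2*x4^2 + 12*x3^4*x4^2
      + 36*x0*x2*x3*x4^3 + 36*x1*x2*x3*x4^3 + x0^2*x4^4 - 10*x0*x1*x4^4 + x1^2*x4^4
      + 12*x2^2*x4^4 + 12*x3^2*x4^4 + 4*x4^6 := by
  constructor
  · ring
  · nlinarith [sq_nonneg (-x1^2*x2 + x0*x1*x2 - 2*x2*x3^2 + x2^3 - x1*x3*x4 + 2*x0*x3*x4 + x2*x4^2),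
      sq_nonneg (x0^2*x3 - x0*x1*x3 + 2*x2^2*x3 - x3^3 + x0*x2*x4 - 2*x1*x2*x4 - x3*x4^2),
      sq_nonneg (2*x0*x1*x4 - x0*x2*x3 - x1*x2*x3 + x2^2*x4 + x3^2*x4 - 2*x4^3),
      sq_nonneg (x0^2*x1 - x0*x1^2 + x0*x2^2 - x0*x4^2 - x1*x3^2 + x1*x4^2),
      sq_nonneg (x0*x2*x3 - x1*x2*x3 + x2^2*x4 - x3^2*x4),
      sq_nonneg (x2*x3^2 - x0*x3*x4 - x2*x4^2),
      sq_nonneg (x2^2*x3 - x1*x2*x4 - x3*x4^2)]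
end

section
/- The quartic polynomial f₂(x₀,x₁,x₂) = (2x₀² + x₀x₁ + 2x₀x₂ − x₁²)² + (x₀² − x₁² − x₂²)² + (x₀² − 2x₀x₂ − x₁² − x₁x₂ − 3x₂²)² is nonnegative on ℝ³, and its real projective zero locus in ℙ²(ℝ) consists of exactly two points, namely [1 : 0 : −1] and [1 : −1 : 0] (in the affine chart x₀ = 1: the points (0,−1) and (−1,0)). -/
/-- The quartic `f₂ = (2x₀² + x₀x₁ + 2x₀x₂ − x₁²)² + (x₀² − x₁² − x₂²)² +
(x₀² − 2x₀x₂ − x₁² − x₁x₂ − 3x₂²)²` is nonnegative on ℝ³, and its real projective zero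
locus consists of exactly the two points `[1 : 0 : −1]` and `[1 : −1 : 0]`. -/
theorem bordiga_sos_quartic_two_real_zeros (x0 x1 x2 : ℝ) :
    0 ≤ (2*x0^2 + x0*x1 + 2*x0*x2 - x1^2)^2 + (x0^2 - x1^2 - x2^2)^2
        + (x0^2 - 2*x0*x2 - x1^2 - x1*x2 - 3*x2^2)^2 ∧
    (¬(x0 = 0 ∧ x1 = 0 ∧ x2 = 0) →
      ((2*x0^2 + x0*x1 + 2*x0*x2 - x1^2)^2 + (x0^2 - x1^2 - x2^2)^2
        + (x0^2 - 2*x0*x2 - x1^2 - x1*x2 - 3*x2^2)^2 = 0 ↔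
        ∃ c : ℝ, c ≠ 0 ∧
          ((x0, x1, x2) = (c, 0, -c) ∨ (x0, x1, x2) = (c, -c, 0)))) := by
  constructor
  · positivity
  · intro hnz
    constructor
    · intro h
      have h1 : 2*x0^2 + x0*x1 + 2*x0*x2 - x1^2 = 0 := by
        nlinarith [sq_nonneg (x0^2 - x1^2 - x2^2),
          sq_nonneg (x0^2 - 2*x0*x2 - x1^2 - x1*x2 - 3*x2^2),
          sq_nonneg (2*x0^2 + x0*x1 + 2*x0*x2 - x1^2)]
      have h2 : x0^2 - x1^2 - x2^2 = 0 := by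
        nlinarith [sq_nonneg (x0^2 - x1^2 - x2^2),
          sq_nonneg (x0^2 - 2*x0*x2 - x1^2 - x1*x2 - 3*x2^2),
          sq_nonneg (2*x0^2 + x0*x1 + 2*x0*x2 - x1^2)]
      have h3 : x0^2 - 2*x0*x2 - x1^2 - x1*x2 - 3*x2^2 = 0 := by
        nlinarith [sq_nonneg (x0^2 - x1^2 - x2^2),
          sq_nonneg (x0^2 - 2*x0*x2 - x1^2 - x1*x2 - 3*x2^2),
          sq_nonneg (2*x0^2 + x0*x1 + 2*x0*x2 - x1^2)]
      have h4 : x2 * (2*x0 + x1 + 2*x2) = 0 := by linear_combination h2 - h3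
      rcases mul_eq_zero.mp h4 with hx2 | hs
      · -- x2 = 0
        have h5 : x0 * (x0 + x1) = 0 := by
          linear_combination h1 - h2 + (-2*x0 - x2) * hx2
        rcases mul_eq_zero.mp h5 with hx0 | hsum
        · exfalso
          have hx1 : x1 = 0 := by nlinarith [h2, hx0, hx2, sq_nonneg x1]
          exact hnz ⟨hx0, hx1, hx2⟩
        · refine ⟨x0, ?_, Or.inr ?_⟩
          · intro hx0
            have hx1 : x1 = 0 := by linarith [hsum, hx0]
            exact hnz ⟨hx0, hx1, hx2⟩
          · have : x1 = -x0 := by linarith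
            simp [this, hx2]
      · -- 2x0 + x1 + 2x2 = 0
        have hx1 : x1 = 0 := by
          have : x1^2 = 0 := by linear_combination x0 * hs - h1
          exact pow_eq_zero_iff (n := 2) (by norm_num) |>.mp this
        have hx2 : x2 = -x0 := by linarith [hs, hx1]
        refine ⟨x0, ?_, Or.inl ?_⟩
        · intro hx0
          exact hnz ⟨hx0, hx1, by rw [hx2, hx0]; ring⟩
        · simp [hx1, hx2]
    · rintro ⟨c, hc, h | h⟩ <;> simp_all <;> obtain ⟨h0, h1, h2⟩ := h <;> subst h0 <;> subst h1 <;> subst h2 <;> ring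
end
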